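/- Let n, m ∈ ℕ with m ≤ n, let π be a permutation of Fin n, let B₀, B₁ be disjoint subsets of Fin n with B₀ ∪ B₁ = { i : Fin n | (π i : ℕ) < m }, and let Γ be a subgroup of the permutations of Fin n. Let x̄ : Fin n → ℝ satisfy x̄ i ∈ {0,1} for all i, x̄ i = 1 for all i ∈ B₁, x̄ i = 0 for all i ∈ B₀, and suppose (π • x̄)|m ⪰ (π • (γ • x̄))|m for every γ ∈ Γ. Then for every γ ∈ Γ with γ '' B₁ = B₁ and every i ∈ B₀, x̄ (γ⁻¹ i) = 0. -/

import Mathlib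

/-- Action of a permutation of `Fin n` on vectors `x : Fin n → ℝ`:
`(γ • x) i = x (γ⁻¹ i)`. -/
def pact {n : ℕ} (γ : Equiv.Perm (Fin n)) (x : Fin n → ℝ) : Fin n → ℝ :=
  fun i => x (γ⁻¹ i)

/-- Lexicographic order `u ⪰ v` on `Fin m → ℝ`. -/
def lexGe {m : ℕ} (u v : Fin m → ℝ) : Prop :=
  u = v ∨ ∃ k : Fin m, (∀ i : Fin m, i < k → u i = v i) ∧ v k < u k

/-- Restriction of `z : Fin n → ℝ` to its first `m` coordinates. -/
def restr {n : ℕ} (m : ℕ) (h : m ≤ n) (z : Fin n → ℝ) : Fin m → ℝ :=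
  fun k => z (Fin.castLE h k)

theorem stmt2 (n m : ℕ) (hmn : m ≤ n) (π : Equiv.Perm (Fin n))
    (B₀ B₁ : Set (Fin n)) (hdisj : Disjoint B₀ B₁)
    (hcover : B₀ ∪ B₁ = {i : Fin n | (π i : ℕ) < m})
    (Γ : Subgroup (Equiv.Perm (Fin n)))
    (x : Fin n → ℝ) (hx01 : ∀ i, x i = 0 ∨ x i = 1)
    (hx1 : ∀ i ∈ B₁, x i = 1) (hx0 : ∀ i ∈ B₀, x i = 0)
    (hshc : ∀ γ ∈ Γ,
      lexGe (restr m hmn (pact π x)) (restr m hmn (pact π (pact γ x)))) :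
    ∀ γ ∈ Γ, (γ : Fin n → Fin n) '' B₁ = B₁ → ∀ i ∈ B₀, x (γ⁻¹ i) = 0 := by
  intro γ hγ hB₁ i hi
  by_contra hne
  have hx1' : x (γ⁻¹ i) = 1 := (hx01 _).resolve_left hne
  have him : (π i : ℕ) < m := by
    have : i ∈ B₀ ∪ B₁ := Set.mem_union_left B₁ hi
    rw [hcover] at this; exact this
  set k : Fin m := ⟨π i, him⟩ with hk
  have hcast : Fin.castLE hmn k = π i := Fin.ext rfl
  have hu : restr m hmn (pact π x) k = 0 := by
    simp [restr, pact, hcast, hx0 i hi]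
  have hv : restr m hmn (pact π (pact γ x)) k = 1 := by
    simp [restr, pact, hcast, hx1']; exact hx1'
  rcases hshc γ hγ with heq | ⟨k', hlt, hgt⟩
  · rw [heq, hv] at hu; norm_num at hu
  · have hk'k : k' < k := by
      rcases lt_trichotomy k' k with h | h | h
      · exact h
      · rw [h, hu, hv] at hgt; norm_num at hgt
      · have hek := hlt k h
        rw [hu, hv] at hek; norm_num at hek
    set j : Fin n := π⁻¹ (Fin.castLE hmn k') with hj
    have huj : restr m hmn (pact π x) k' = x j := by simp [restr, pact]; rfl
    have hvj : restr m hmn (pact π (pact γ x)) k' = x (γ⁻¹ j) := by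
      simp [restr, pact]; rfl
    have hxj : x j = 1 := by
      rcases hx01 j with h0 | h1
      · rw [huj, h0] at hgt
        rcases hx01 (γ⁻¹ j) with g0 | g1
        · rw [hvj, g0] at hgt; exact absurd hgt (lt_irrefl _)
        · rw [hvj, g1] at hgt; norm_num at hgt
      · exact h1
    have hjm : (π j : ℕ) < m := by
      have : π j = Fin.castLE hmn k' := by simp [hj]
      rw [this]; exact k'.isLt
    have hjB : j ∈ B₀ ∪ B₁ := by rw [hcover]; exact hjm
    have hjB1 : j ∈ B₁ := by
      rcases hjB with h | h
      · rw [hx0 j h] at hxj; norm_num at hxj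
      · exact h
    have : γ⁻¹ j ∈ B₁ := by
      have : j ∈ (γ : Fin n → Fin n) '' B₁ := by rw [← hB₁] at hjB1; exact hjB1
      rcases this with ⟨a, haB, hga⟩
      have : γ⁻¹ j = a := by rw [← hga]; simp
      rw [this]; exact haB
    have hvj1 : x (γ⁻¹ j) = 1 := hx1 _ this
    rw [huj, hvj, hxj, hvj1] at hgt
    exact absurd hgt (lt_irrefl _)
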